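/- Let X be a topological space, Z, S ⊆ X closed subsets, Y a metric space, and f : X → Y length-minimizing relative to Z. Then the restriction f|_S : S → Y is length-minimizing relative to ∂S ∪ (Z ∩ S), where ∂S denotes the topological boundary of S in X. -/

import Mathlib

open Set Metric ENNReal unitInterval

noncomputable section

/-- The length of a curve parametrized by the unit interval, as total variation. -/
def curveELength {Y : Type*} [PseudoEMetricSpace Y] (c : unitInterval → Y) : ℝ≥0∞ :=
  eVariationOn c Set.univ

/-- The length pseudodistance induced by a map `f : X → Y`: the infimum of the lengths of
`f ∘ γ` over all curves `γ` joining the two points (`⊤` if there is no such curve). -/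
def lengthPd {X Y : Type*} [TopologicalSpace X] [PseudoEMetricSpace Y]
    (f : X → Y) (x z : X) : ℝ≥0∞ :=
  ⨅ γ : Path x z, curveELength (fun t => f (γ t))

/-- `f` is length-connected: the induced length pseudodistance is everywhere finite. -/
def LengthConnected {X Y : Type*} [TopologicalSpace X] [PseudoEMetricSpace Y]
    (f : X → Y) : Prop :=
  ∀ x z : X, lengthPd f x z ≠ ⊤

/-- The connecting pseudodistance induced by `f`: infimum of `diam (f '' C)` over connected
sets `C` containing both points. -/
def connPd {X Y : Type*} [TopologicalSpace X] [PseudoEMetricSpace Y]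
    (f : X → Y) (x z : X) : ℝ≥0∞ :=
  ⨅ C : {C : Set X // IsConnected C ∧ x ∈ C ∧ z ∈ C}, EMetric.diam (f '' (C : Set X))

/-- `g` does not increase the length of any curve, compared with `f`. -/
def IsShorter {X Y : Type*} [TopologicalSpace X] [PseudoEMetricSpace Y]
    (f g : X → Y) : Prop :=
  ∀ c : C(unitInterval, X), curveELength (fun t => g (c t)) ≤ curveELength (fun t => f (c t))

/-- `f` is length-minimizing relative to `Z`: any continuous competitor agreeing with `f`
on `Z` and not increasing the length of any curve in fact preserves all curve lengths. -/
def LengthMinimizing {X Y : Type*} [TopologicalSpace X] [PseudoEMetricSpace Y]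
    (f : X → Y) (Z : Set X) : Prop :=
  Continuous f ∧ ∀ g : X → Y, Continuous g → Set.EqOn f g Z → IsShorter f g →
    ∀ c : C(unitInterval, X), curveELength (fun t => g (c t)) = curveELength (fun t => f (c t))

/-- `γ : ℝ → Y` is a unit-speed geodesic from `x` to `y` (on `[0, dist x y]`). -/
def IsGeodesicParam {Y : Type*} [MetricSpace Y] (γ : ℝ → Y) (x y : Y) : Prop :=
  γ 0 = x ∧ γ (dist x y) = y ∧
    ∀ s ∈ Set.Icc (0:ℝ) (dist x y), ∀ t ∈ Set.Icc (0:ℝ) (dist x y),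
      dist (γ s) (γ t) = |s - t|

/-- A geodesic metric space: any two points are joined by a geodesic. -/
def IsGeodesicSpace (Y : Type*) [MetricSpace Y] : Prop :=
  ∀ x y : Y, ∃ γ : ℝ → Y, IsGeodesicParam γ x y

/-- The diameter `R_κ` of the model surface `M_κ`: `π/√κ` for `κ > 0`, `∞` otherwise. -/
def modelDiam (κ : ℝ) : ℝ≥0∞ :=
  if κ ≤ 0 then ⊤ else ENNReal.ofReal (Real.pi / Real.sqrt κ)

/-- Cosine of the angle opposite the side of length `c` in a triangle of side lengths
`a`, `b`, `c` in the model plane of curvature `κ` (law of cosines). -/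
def modelCosAngle (κ a b c : ℝ) : ℝ :=
  if κ = 0 then (a ^ 2 + b ^ 2 - c ^ 2) / (2 * a * b)
  else if 0 < κ then
    (Real.cos (Real.sqrt κ * c) - Real.cos (Real.sqrt κ * a) * Real.cos (Real.sqrt κ * b)) /
      (Real.sin (Real.sqrt κ * a) * Real.sin (Real.sqrt κ * b))
  else
    (Real.cosh (Real.sqrt (-κ) * a) * Real.cosh (Real.sqrt (-κ) * b) -
        Real.cosh (Real.sqrt (-κ) * c)) /
      (Real.sinh (Real.sqrt (-κ) * a) * Real.sinh (Real.sqrt (-κ) * b))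

/-- Distance in the model plane of curvature `κ` between the endpoints of two segments of
lengths `a` and `b` emanating from a common vertex at an angle with cosine `cosθ`. -/
def modelSideLength (κ a b cosθ : ℝ) : ℝ :=
  if κ = 0 then Real.sqrt (a ^ 2 + b ^ 2 - 2 * a * b * cosθ)
  else if 0 < κ then
    Real.arccos (Real.cos (Real.sqrt κ * a) * Real.cos (Real.sqrt κ * b) +
      Real.sin (Real.sqrt κ * a) * Real.sin (Real.sqrt κ * b) * cosθ) / Real.sqrt κ
  else
    -- `Real.log (x + √(x² - 1))` is the inverse hyperbolic cosine `arcosh x`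
    Real.log ((Real.cosh (Real.sqrt (-κ) * a) * Real.cosh (Real.sqrt (-κ) * b) -
        Real.sinh (Real.sqrt (-κ) * a) * Real.sinh (Real.sqrt (-κ) * b) * cosθ) +
      Real.sqrt ((Real.cosh (Real.sqrt (-κ) * a) * Real.cosh (Real.sqrt (-κ) * b) -
        Real.sinh (Real.sqrt (-κ) * a) * Real.sinh (Real.sqrt (-κ) * b) * cosθ) ^ 2 - 1)) /
      Real.sqrt (-κ)

/-- `Y` is a CAT(κ) space: complete, geodesic, and every geodesic triangle of perimeter
`< 2 R_κ` satisfies the point-side comparison with its model triangle in `M_κ`. -/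
def IsCATSpace (κ : ℝ) (Y : Type*) [MetricSpace Y] : Prop :=
  CompleteSpace Y ∧ IsGeodesicSpace Y ∧
    ∀ p q r : Y, ∀ γ : ℝ → Y, IsGeodesicParam γ p q →
      ENNReal.ofReal (dist p q + dist q r + dist r p) < 2 * modelDiam κ →
      ∀ s ∈ Set.Icc (0:ℝ) (dist p q),
        dist (γ s) r ≤
          modelSideLength κ s (dist p r) (modelCosAngle κ (dist p q) (dist p r) (dist q r))

/-- A set is geodesically convex if every geodesic between its points stays inside it. -/
def IsGeodesicallyConvex {Y : Type*} [MetricSpace Y] (K : Set Y) : Prop :=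
  ∀ x ∈ K, ∀ y ∈ K, ∀ γ : ℝ → Y, IsGeodesicParam γ x y →
    ∀ t ∈ Set.Icc (0:ℝ) (dist x y), γ t ∈ K

/-- A finite graph (connected finite one-dimensional CW complex) structure on a
topological space `Γ`: finitely many edges, injective away from endpoints, with
endpoints in a finite vertex set, covering `Γ`. -/
structure FiniteGraphStruct (Γ : Type*) [TopologicalSpace Γ] where
  n : ℕ
  edge : Fin n → C(unitInterval, Γ)
  vertices : Set Γ
  vertices_finite : vertices.Finite
  endpoints_mem : ∀ i, edge i 0 ∈ vertices ∧ edge i 1 ∈ vertices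
  inj_on : ∀ i, Set.InjOn (edge i) {t : unitInterval | t ≠ 0 ∧ t ≠ 1}
  cover : ∀ x : Γ, x ∈ vertices ∨ ∃ i t, edge i t = x

end


section AuxLemmas

open Set

variable {Y : Type*} [PseudoEMetricSpace Y]

private lemma evar_Icc_add_Icc (f : ℝ → Y) {a b c : ℝ} (hab : a ≤ b) (hbc : b ≤ c) :
    eVariationOn f (Icc a b) + eVariationOn f (Icc b c) = eVariationOn f (Icc a c) := by
  have := eVariationOn.Icc_add_Icc f (s := (Set.univ : Set ℝ)) hab hbc (Set.mem_univ b)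
  simpa using this

private lemma key_evar_le (φ ψ : ℝ → Y) (V : Set ℝ)
    (hVc : IsClosed (Icc (0:ℝ) 1 \ V))
    (heq : Set.EqOn ψ φ (Icc (0:ℝ) 1 \ V))
    (hshort : ∀ u v : ℝ, 0 ≤ u → u ≤ v → v ≤ 1 → Ioo u v ⊆ V →
      eVariationOn ψ (Icc u v) ≤ eVariationOn φ (Icc u v)) :
    eVariationOn ψ (Icc (0:ℝ) 1) ≤ eVariationOn φ (Icc (0:ℝ) 1) := by
  classical
  set C : Set ℝ := Icc (0:ℝ) 1 \ V with hCdef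
  have hCsub : C ⊆ Icc (0:ℝ) 1 := diff_subset
  have hCc : IsClosed C := hVc
  have hDcl : ∀ t : ℝ, IsClosed ({0} ∪ (C ∩ Iic t)) := fun t =>
    isClosed_singleton.union (hCc.inter isClosed_Iic)
  have hDne : ∀ t : ℝ, ({(0:ℝ)} ∪ (C ∩ Iic t)).Nonempty := fun t => ⟨0, Or.inl rfl⟩
  have hDbdd : ∀ t : ℝ, BddAbove ({(0:ℝ)} ∪ (C ∩ Iic t)) := by
    intro t
    refine ⟨max 1 t, ?_⟩
    rintro x (rfl | ⟨hxC, hxt⟩)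
    · exact le_max_of_le_left zero_le_one
    · exact le_max_of_le_right hxt
  set b : ℝ → ℝ := fun t => sSup ({0} ∪ (C ∩ Iic t)) with hbdef
  have hb_mem : ∀ t, b t ∈ {(0:ℝ)} ∪ (C ∩ Iic t) := fun t =>
    (hDcl t).csSup_mem (hDne t) (hDbdd t)
  have hb_nonneg : ∀ t, 0 ≤ b t := fun t => le_csSup (hDbdd t) (Or.inl rfl)
  have hb_le : ∀ t, 0 ≤ t → b t ≤ t := by
    intro t ht
    refine csSup_le (hDne t) ?_
    rintro x (rfl | ⟨_, hxt⟩)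
    exacts [ht, hxt]
  have hb_mono : ∀ s t : ℝ, s ≤ t → b s ≤ b t := by
    intro s t hst
    refine csSup_le_csSup (hDbdd t) (hDne s) ?_
    rintro x (rfl | ⟨hxC, hxs⟩)
    · exact Or.inl rfl
    · exact Or.inr ⟨hxC, hxs.trans hst⟩
  have hb_Ioo : ∀ t : ℝ, t ≤ 1 → Ioo (b t) t ⊆ V := by
    intro t ht1 s hs
    by_contra hsV
    have hsC : s ∈ C := ⟨⟨(hb_nonneg t).trans hs.1.le, hs.2.le.trans ht1⟩, hsV⟩
    exact absurd (le_csSup (hDbdd t) (Or.inr ⟨hsC, hs.2.le⟩)) (not_le.2 hs.1)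
  have hb_self : ∀ t : ℝ, t ∈ C → b t = t := fun t ht =>
    le_antisymm (hb_le t (hCsub ht).1) (le_csSup (hDbdd t) (Or.inr ⟨ht, Set.mem_Iic.2 le_rfl⟩))
  have hEcl : ∀ t : ℝ, IsClosed ({1} ∪ (C ∩ Ici t)) := fun t =>
    isClosed_singleton.union (hCc.inter isClosed_Ici)
  have hEne : ∀ t : ℝ, ({(1:ℝ)} ∪ (C ∩ Ici t)).Nonempty := fun t => ⟨1, Or.inl rfl⟩
  have hEbdd : ∀ t : ℝ, BddBelow ({(1:ℝ)} ∪ (C ∩ Ici t)) := by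
    intro t
    refine ⟨min 0 t, ?_⟩
    rintro x (rfl | ⟨hxC, hxt⟩)
    · exact min_le_of_left_le zero_le_one
    · exact min_le_of_right_le hxt
  set e : ℝ → ℝ := fun t => sInf ({1} ∪ (C ∩ Ici t)) with hedef
  have he_mem : ∀ t, e t ∈ {(1:ℝ)} ∪ (C ∩ Ici t) := fun t =>
    (hEcl t).csInf_mem (hEne t) (hEbdd t)
  have he_le1 : ∀ t, e t ≤ 1 := fun t => csInf_le (hEbdd t) (Or.inl rfl)
  have he_ge : ∀ t : ℝ, t ≤ 1 → t ≤ e t := by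
    intro t ht
    refine le_csInf (hEne t) ?_
    rintro x (rfl | ⟨_, hxt⟩)
    exacts [ht, hxt]
  have he_Ioo : ∀ t : ℝ, 0 ≤ t → Ioo t (e t) ⊆ V := by
    intro t ht0 s hs
    by_contra hsV
    have hsC : s ∈ C := ⟨⟨ht0.trans hs.1.le, hs.2.le.trans (he_le1 t)⟩, hsV⟩
    exact absurd (csInf_le (hEbdd t) (Or.inr ⟨hsC, hs.1.le⟩)) (not_le.2 hs.2)
  have he_self : ∀ t : ℝ, t ∈ C → e t = t := fun t ht =>
    le_antisymm (csInf_le (hEbdd t) (Or.inr ⟨ht, Set.mem_Ici.2 le_rfl⟩)) (he_ge t (hCsub ht).2)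
  refine iSup_le ?_
  rintro ⟨N, u, hu, us⟩
  have key : ∀ m : ℕ,
      (∑ i ∈ Finset.range m, edist (ψ (u (i+1))) (ψ (u i)))
        ≤ eVariationOn φ (Icc 0 (b (u m))) + eVariationOn ψ (Icc (b (u m)) (u m)) := by
    intro m
    induction m with
    | zero => simp
    | succ n ih =>
      have htt' : u n ≤ u (n+1) := hu (Nat.le_succ n)
      have ht01 : u n ∈ Icc (0:ℝ) 1 := us n
      have ht'01 : u (n+1) ∈ Icc (0:ℝ) 1 := us (n+1)
      have hpt : b (u n) ≤ u n := hb_le (u n) ht01.1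
      have hp0 : 0 ≤ b (u n) := hb_nonneg (u n)
      have hp't' : b (u (n+1)) ≤ u (n+1) := hb_le (u (n+1)) ht'01.1
      have hp'0 : 0 ≤ b (u (n+1)) := hb_nonneg (u (n+1))
      have hpp' : b (u n) ≤ b (u (n+1)) := hb_mono _ _ htt'
      rw [Finset.sum_range_succ]
      by_cases hcase : b (u (n+1)) ≤ u n
      · -- Case A
        have e1 : edist (ψ (u (n+1))) (ψ (u n)) ≤ eVariationOn ψ (Icc (u n) (u (n+1))) :=
          eVariationOn.edist_le ψ (right_mem_Icc.2 htt') (left_mem_Icc.2 htt')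
        have comb : eVariationOn ψ (Icc (b (u n)) (u n)) + eVariationOn ψ (Icc (u n) (u (n+1)))
            = eVariationOn ψ (Icc (b (u n)) (u (n+1))) := evar_Icc_add_Icc ψ hpt htt'
        have split : eVariationOn ψ (Icc (b (u n)) (u (n+1)))
            = eVariationOn ψ (Icc (b (u n)) (b (u (n+1))))
              + eVariationOn ψ (Icc (b (u (n+1))) (u (n+1))) :=
          (evar_Icc_add_Icc ψ hpp' hp't').symm
        have hsh : eVariationOn ψ (Icc (b (u n)) (b (u (n+1))))
            ≤ eVariationOn φ (Icc (b (u n)) (b (u (n+1)))) := by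
          refine hshort _ _ hp0 hpp' (hp't'.trans ht'01.2) ?_
          intro s hs
          exact hb_Ioo (u n) ht01.2 ⟨hs.1, lt_of_lt_of_le hs.2 hcase⟩
        have hφcomb : eVariationOn φ (Icc 0 (b (u n)))
              + eVariationOn φ (Icc (b (u n)) (b (u (n+1))))
            = eVariationOn φ (Icc 0 (b (u (n+1)))) := evar_Icc_add_Icc φ hp0 hpp'
        calc (∑ i ∈ Finset.range n, edist (ψ (u (i+1))) (ψ (u i)))
              + edist (ψ (u (n+1))) (ψ (u n))
            ≤ (eVariationOn φ (Icc 0 (b (u n))) + eVariationOn ψ (Icc (b (u n)) (u n)))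
              + eVariationOn ψ (Icc (u n) (u (n+1))) := add_le_add ih e1
          _ = eVariationOn φ (Icc 0 (b (u n)))
              + eVariationOn ψ (Icc (b (u n)) (u (n+1))) := by rw [add_assoc, comb]
          _ = eVariationOn φ (Icc 0 (b (u n)))
              + (eVariationOn ψ (Icc (b (u n)) (b (u (n+1))))
                + eVariationOn ψ (Icc (b (u (n+1))) (u (n+1)))) := by rw [split]
          _ ≤ eVariationOn φ (Icc 0 (b (u n)))
              + (eVariationOn φ (Icc (b (u n)) (b (u (n+1))))
                + eVariationOn ψ (Icc (b (u (n+1))) (u (n+1)))) := by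
              exact add_le_add_right (add_le_add_left hsh _) _
          _ = eVariationOn φ (Icc 0 (b (u (n+1))))
              + eVariationOn ψ (Icc (b (u (n+1))) (u (n+1))) := by rw [← add_assoc, hφcomb]
      · -- Case B
        push_neg at hcase
        have htq : u n ≤ e (u n) := he_ge (u n) ht01.2
        have hqt' : e (u n) ≤ u (n+1) := by
          by_contra hqt'
          push_neg at hqt'
          have hsub : ∀ x ∈ C, x ≤ u (n+1) → x ≤ b (u n) := by
            intro x hxC hxt'
            by_contra hpx
            push_neg at hpx
            rcases lt_trichotomy x (u n) with hlt | heqx | hgt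
            · exact hxC.2 (hb_Ioo (u n) ht01.2 ⟨hpx, hlt⟩)
            · have : e (u n) = u n := he_self (u n) (heqx ▸ hxC)
              exact absurd (this.le.trans htt') (not_le.2 hqt')
            · exact hxC.2 (he_Ioo (u n) ht01.1 ⟨hgt, lt_of_le_of_lt hxt' hqt'⟩)
          have hp'le : b (u (n+1)) ≤ b (u n) := by
            refine csSup_le (hDne (u (n+1))) ?_
            rintro x (rfl | ⟨hxC, hxt⟩)
            · exact hp0
            · exact hsub x hxC hxt
          exact absurd (hcase.trans_le hp'le) (not_lt.2 hpt)
        have hqC : e (u n) ∈ C := by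
          rcases he_mem (u n) with hq1 | hqmem
          · rw [mem_singleton_iff] at hq1
            by_cases htC : u n ∈ C
            · rw [he_self (u n) htC]; exact htC
            · by_cases h1C : (1:ℝ) ∈ C
              · rw [hq1]; exact h1C
              · exfalso
                have h1V : (1:ℝ) ∈ V := by
                  by_contra h1V
                  exact h1C ⟨⟨zero_le_one, le_rfl⟩, h1V⟩
                have htV : u n ∈ V := by
                  by_contra htV
                  exact htC ⟨ht01, htV⟩
                have hsub : ∀ x ∈ C, x ≤ u (n+1) → x ≤ b (u n) := by
                  intro x hxC hxt'
                  by_contra hpx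
                  push_neg at hpx
                  rcases lt_trichotomy x (u n) with hlt | heqx | hgt
                  · exact hxC.2 (hb_Ioo (u n) ht01.2 ⟨hpx, hlt⟩)
                  · exact hxC.2 (heqx ▸ htV)
                  · rcases lt_or_eq_of_le (hxt'.trans ht'01.2) with hx1 | hx1
                    · exact hxC.2 (he_Ioo (u n) ht01.1 ⟨hgt, by rw [hq1]; exact hx1⟩)
                    · exact hxC.2 (hx1 ▸ h1V)
                have hp'le : b (u (n+1)) ≤ b (u n) := by
                  refine csSup_le (hDne (u (n+1))) ?_
                  rintro x (rfl | ⟨hxC, hxt⟩)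
                  · exact hp0
                  · exact hsub x hxC hxt
                exact absurd (hcase.trans_le hp'le) (not_lt.2 hpt)
          · exact hqmem.1
        have hq1 : e (u n) ≤ 1 := he_le1 (u n)
        have hqp' : e (u n) ≤ b (u (n+1)) :=
          le_csSup (hDbdd (u (n+1))) (Or.inr ⟨hqC, hqt'⟩)
        have hp'C : b (u (n+1)) ∈ C := by
          rcases hb_mem (u (n+1)) with h0 | hmem
          · rw [mem_singleton_iff] at h0
            exfalso
            have : (0:ℝ) ≤ u n := ht01.1
            rw [h0] at hcase
            exact absurd hcase (not_lt.2 this)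
          · exact hmem.1
        have hψq : ψ (e (u n)) = φ (e (u n)) := heq hqC
        have hψp' : ψ (b (u (n+1))) = φ (b (u (n+1))) := heq hp'C
        have hIoopq : Ioo (b (u n)) (e (u n)) ⊆ V := by
          intro s hs
          rcases lt_trichotomy s (u n) with hlt | heqx | hgt
          · exact hb_Ioo (u n) ht01.2 ⟨hs.1, hlt⟩
          · by_contra hsV
            have htC : u n ∈ C := ⟨ht01, by rwa [heqx] at hsV⟩
            have hbeq : b (u n) = u n := hb_self (u n) htC
            have := hs.1
            rw [heqx, hbeq] at this
            exact lt_irrefl _ this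
          · exact he_Ioo (u n) ht01.1 ⟨hgt, hs.2⟩
        have e1 : edist (ψ (u (n+1))) (ψ (u n))
            ≤ eVariationOn ψ (Icc (u n) (e (u n)))
              + (eVariationOn φ (Icc (e (u n)) (b (u (n+1))))
                + eVariationOn ψ (Icc (b (u (n+1))) (u (n+1)))) := by
          have t1 : edist (ψ (u n)) (ψ (e (u n))) ≤ eVariationOn ψ (Icc (u n) (e (u n))) :=
            eVariationOn.edist_le ψ (left_mem_Icc.2 htq) (right_mem_Icc.2 htq)
          have t2 : edist (ψ (e (u n))) (ψ (b (u (n+1))))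
              ≤ eVariationOn φ (Icc (e (u n)) (b (u (n+1)))) := by
            rw [hψq, hψp']
            exact eVariationOn.edist_le φ (left_mem_Icc.2 hqp') (right_mem_Icc.2 hqp')
          have t3 : edist (ψ (b (u (n+1)))) (ψ (u (n+1)))
              ≤ eVariationOn ψ (Icc (b (u (n+1))) (u (n+1))) :=
            eVariationOn.edist_le ψ (left_mem_Icc.2 hp't') (right_mem_Icc.2 hp't')
          calc edist (ψ (u (n+1))) (ψ (u n)) = edist (ψ (u n)) (ψ (u (n+1))) := edist_comm _ _
            _ ≤ edist (ψ (u n)) (ψ (e (u n))) + edist (ψ (e (u n))) (ψ (u (n+1))) :=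
                edist_triangle _ _ _
            _ ≤ edist (ψ (u n)) (ψ (e (u n)))
                + (edist (ψ (e (u n))) (ψ (b (u (n+1))))
                  + edist (ψ (b (u (n+1)))) (ψ (u (n+1)))) :=
                add_le_add_right (edist_triangle _ _ _) _
            _ ≤ _ := add_le_add t1 (add_le_add t2 t3)
        have hsum1 : eVariationOn ψ (Icc (b (u n)) (u n)) + eVariationOn ψ (Icc (u n) (e (u n)))
            = eVariationOn ψ (Icc (b (u n)) (e (u n))) := evar_Icc_add_Icc ψ hpt htq
        have hsh2 : eVariationOn ψ (Icc (b (u n)) (e (u n)))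
            ≤ eVariationOn φ (Icc (b (u n)) (e (u n))) :=
          hshort _ _ hp0 (hpt.trans htq) hq1 hIoopq
        have hsum2 : eVariationOn φ (Icc 0 (b (u n)))
              + eVariationOn φ (Icc (b (u n)) (e (u n)))
            = eVariationOn φ (Icc 0 (e (u n))) := evar_Icc_add_Icc φ hp0 (hpt.trans htq)
        have hsum3 : eVariationOn φ (Icc 0 (e (u n)))
              + eVariationOn φ (Icc (e (u n)) (b (u (n+1))))
            = eVariationOn φ (Icc 0 (b (u (n+1)))) :=
          evar_Icc_add_Icc φ (hp0.trans (hpt.trans htq)) hqp'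
        calc (∑ i ∈ Finset.range n, edist (ψ (u (i+1))) (ψ (u i)))
              + edist (ψ (u (n+1))) (ψ (u n))
            ≤ (eVariationOn φ (Icc 0 (b (u n))) + eVariationOn ψ (Icc (b (u n)) (u n)))
              + (eVariationOn ψ (Icc (u n) (e (u n)))
                + (eVariationOn φ (Icc (e (u n)) (b (u (n+1))))
                  + eVariationOn ψ (Icc (b (u (n+1))) (u (n+1))))) := add_le_add ih e1
          _ = (eVariationOn φ (Icc 0 (b (u n)))
                + (eVariationOn ψ (Icc (b (u n)) (u n))
                  + eVariationOn ψ (Icc (u n) (e (u n)))))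
              + eVariationOn φ (Icc (e (u n)) (b (u (n+1))))
              + eVariationOn ψ (Icc (b (u (n+1))) (u (n+1))) := by ring
          _ = (eVariationOn φ (Icc 0 (b (u n)))
                + eVariationOn ψ (Icc (b (u n)) (e (u n))))
              + eVariationOn φ (Icc (e (u n)) (b (u (n+1))))
              + eVariationOn ψ (Icc (b (u (n+1))) (u (n+1))) := by rw [hsum1]
          _ ≤ (eVariationOn φ (Icc 0 (b (u n)))
                + eVariationOn φ (Icc (b (u n)) (e (u n))))
              + eVariationOn φ (Icc (e (u n)) (b (u (n+1))))
              + eVariationOn ψ (Icc (b (u (n+1))) (u (n+1))) := by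
              exact add_le_add_left (add_le_add_left (add_le_add_right hsh2 _) _) _
          _ = eVariationOn φ (Icc 0 (e (u n)))
              + eVariationOn φ (Icc (e (u n)) (b (u (n+1))))
              + eVariationOn ψ (Icc (b (u (n+1))) (u (n+1))) := by rw [hsum2]
          _ = eVariationOn φ (Icc 0 (b (u (n+1))))
              + eVariationOn ψ (Icc (b (u (n+1))) (u (n+1))) := by rw [hsum3]
  have htN : u N ∈ Icc (0:ℝ) 1 := us N
  have h1 : eVariationOn ψ (Icc (b (u N)) (u N)) ≤ eVariationOn φ (Icc (b (u N)) (u N)) :=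
    hshort _ _ (hb_nonneg (u N)) (hb_le (u N) htN.1) htN.2 (hb_Ioo (u N) htN.2)
  calc (∑ i ∈ Finset.range N, edist (ψ (u (i+1))) (ψ (u i)))
      ≤ eVariationOn φ (Icc 0 (b (u N))) + eVariationOn ψ (Icc (b (u N)) (u N)) := key N
    _ ≤ eVariationOn φ (Icc 0 (b (u N))) + eVariationOn φ (Icc (b (u N)) (u N)) :=
        add_le_add_right h1 _
    _ = eVariationOn φ (Icc 0 (u N)) := evar_Icc_add_Icc φ (hb_nonneg (u N)) (hb_le (u N) htN.1)
    _ ≤ eVariationOn φ (Icc 0 1) := eVariationOn.mono φ (Icc_subset_Icc le_rfl htN.2)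

private lemma evar_affine (m' : ℝ → Y) {u v : ℝ} (huv : u ≤ v) :
    curveELength (fun t : unitInterval => m' (u + ↑t * (v - u)))
      = eVariationOn m' (Icc u v) := by
  have hsub : (0:ℝ) ≤ v - u := sub_nonneg.2 huv
  have hmono : MonotoneOn (fun t : unitInterval => u + ↑t * (v - u)) Set.univ := by
    intro a _ c hcu hac
    have h1 : (a:ℝ) ≤ c := hac
    dsimp only
    nlinarith
  have himg : (fun t : unitInterval => u + ↑t * (v - u)) '' Set.univ = Icc u v := by
    ext y
    constructor
    · rintro ⟨t, -, rfl⟩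
      have h1 := t.2.1
      have h2 := t.2.2
      show u + ↑t * (v - u) ∈ Icc u v
      constructor
      · nlinarith
      · nlinarith
    · intro hy
      rcases eq_or_lt_of_le huv with rfl | hlt
      · have hyu : y = u := le_antisymm hy.2 hy.1
        exact ⟨0, trivial, by simp [hyu]⟩
      · have hvu : (0:ℝ) < v - u := by linarith
        refine ⟨⟨(y - u) / (v - u), div_nonneg (by linarith [hy.1]) hvu.le, ?_⟩, trivial, ?_⟩
        · rw [div_le_one hvu]
          linarith [hy.2]
        · show u + (y - u) / (v - u) * (v - u) = y
          field_simp
          ring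
  have h := eVariationOn.comp_eq_of_monotoneOn m'
    (fun t : unitInterval => u + ↑t * (v - u)) hmono
  rw [himg] at h
  exact h

private lemma curveELength_eq_evar {X : Type*} [TopologicalSpace X] (w : X → Y)
    (c : C(unitInterval, X)) :
    curveELength (fun t => w (c t))
      = eVariationOn (fun x : ℝ => w (c (Set.projIcc 0 1 zero_le_one x))) (Icc 0 1) := by
  have hmono : MonotoneOn ((↑) : unitInterval → ℝ) Set.univ := fun a _ b _ hab => hab
  have h := eVariationOn.comp_eq_of_monotoneOn
      (fun x : ℝ => w (c (Set.projIcc 0 1 zero_le_one x))) ((↑) : unitInterval → ℝ) hmono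
  have himg : ((↑) : unitInterval → ℝ) '' Set.univ = Icc (0:ℝ) 1 := by
    rw [Set.image_univ, Subtype.range_coe]
  rw [himg] at h
  have hfn : ((fun x : ℝ => w (c (Set.projIcc 0 1 zero_le_one x))) ∘ ((↑) : unitInterval → ℝ))
      = fun t => w (c t) := by
    funext t
    simp [Function.comp, Set.projIcc_val]
  rw [hfn] at h
  exact h

end AuxLemmas

set_option maxHeartbeats 1000000 in
/-- a restriction of a length-minimizing map to a closed subset `S` is
length-minimizing relative to `∂S ∪ (Z ∩ S)`. -/
theorem lengthMinimizing_restrict {X Y : Type*} [TopologicalSpace X] [MetricSpace Y]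
    (Z S : Set X) (hZ : IsClosed Z) (hS : IsClosed S) (f : X → Y)
    (hf : LengthMinimizing f Z) :
    LengthMinimizing (fun s : S => f s)
      {s : S | (s : X) ∈ frontier S ∪ (Z ∩ S)} := by
  classical
  obtain ⟨hfc, hfmin⟩ := hf
  refine ⟨hfc.comp continuous_subtype_val, ?_⟩
  intro h hcont heqon hshorter c
  set g : X → Y := fun x => if hx : x ∈ S then h ⟨x, hx⟩ else f x with hgdef
  have hgS : ∀ (x : X) (hx : x ∈ S), g x = h ⟨x, hx⟩ := fun x hx => dif_pos hx
  have hgnS : ∀ x : X, x ∉ S → g x = f x := fun x hx => dif_neg hx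
  have hfrontier : ∀ (x : X) (hx : x ∈ S), x ∉ interior S → f x = h ⟨x, hx⟩ := by
    intro x hx hxi
    have hmem : (⟨x, hx⟩ : S) ∈ {s : S | (s : X) ∈ frontier S ∪ (Z ∩ S)} :=
      Or.inl (by rw [hS.frontier_eq]; exact ⟨hx, hxi⟩)
    exact heqon hmem
  have hfg_off : ∀ x : X, x ∉ interior S → g x = f x := by
    intro x hx
    by_cases hxS : x ∈ S
    · rw [hgS x hxS, ← hfrontier x hxS hx]
    · exact hgnS x hxS
  have hgS' : ContinuousOn g S := by
    rw [continuousOn_iff_continuous_restrict]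
    have hres : S.restrict g = h := funext fun x => hgS x.1 x.2
    rw [show S.domRestrict g = h from hres]
    exact hcont
  have hgT : ContinuousOn g (closure Sᶜ) := by
    refine hfc.continuousOn.congr ?_
    intro x hx
    rw [closure_compl] at hx
    exact hfg_off x hx
  have hgcont : Continuous g := by
    rw [continuous_iff_isClosed]
    intro K hK
    have h1 : IsClosed (S ∩ g ⁻¹' K) := hgS'.preimage_isClosed_of_isClosed hS hK
    have h2 : IsClosed (closure Sᶜ ∩ g ⁻¹' K) :=
      hgT.preimage_isClosed_of_isClosed isClosed_closure hK
    have hcover : g ⁻¹' K = (S ∩ g ⁻¹' K) ∪ (closure Sᶜ ∩ g ⁻¹' K) := by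
      ext x
      constructor
      · intro hx
        by_cases hxS : x ∈ S
        · exact Or.inl ⟨hxS, hx⟩
        · exact Or.inr ⟨subset_closure hxS, hx⟩
      · rintro (⟨-, hx⟩ | ⟨-, hx⟩) <;> exact hx
    rw [hcover]
    exact h1.union h2
  have heqZ : Set.EqOn f g Z := by
    intro x hx
    by_cases hxS : x ∈ S
    · rw [hgS x hxS]
      have hmem : (⟨x, hxS⟩ : S) ∈ {s : S | (s : X) ∈ frontier S ∪ (Z ∩ S)} :=
        Or.inr ⟨hx, hxS⟩
      exact heqon hmem
    · exact (hgnS x hxS).symm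
  have hshort' : IsShorter f g := by
    intro c'
    set m : ℝ → X := fun x => c' (Set.projIcc 0 1 zero_le_one x) with hm
    have hmc : Continuous m := c'.continuous.comp continuous_projIcc
    set V : Set ℝ := {x | x ∈ Icc (0:ℝ) 1 ∧ m x ∈ interior S} with hV
    have hdiff : Icc (0:ℝ) 1 \ V = Icc (0:ℝ) 1 ∩ m ⁻¹' (interior S)ᶜ := by
      ext x
      simp only [hV, Set.mem_diff, Set.mem_setOf_eq, Set.mem_inter_iff, Set.mem_preimage,
        Set.mem_compl_iff]
      tauto
    have hVc : IsClosed (Icc (0:ℝ) 1 \ V) := by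
      rw [hdiff]
      exact isClosed_Icc.inter (isOpen_interior.isClosed_compl.preimage hmc)
    have heq' : Set.EqOn (fun x : ℝ => g (m x)) (fun x : ℝ => f (m x)) (Icc (0:ℝ) 1 \ V) := by
      intro x hx
      have hxm : m x ∉ interior S := by
        rw [hdiff] at hx
        exact hx.2
      exact hfg_off (m x) hxm
    have hshortUV : ∀ u v : ℝ, 0 ≤ u → u ≤ v → v ≤ 1 → Ioo u v ⊆ V →
        eVariationOn (fun x : ℝ => g (m x)) (Icc u v)
          ≤ eVariationOn (fun x : ℝ => f (m x)) (Icc u v) := by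
      intro u v h0 huv h1 hIoo
      rcases eq_or_lt_of_le huv with rfl | hlt
      · rw [Set.Icc_self, eVariationOn.subsingleton _ Set.subsingleton_singleton]
        exact zero_le
      · have hmS : ∀ x ∈ Icc u v, m x ∈ S := by
          have ha : m '' Ioo u v ⊆ interior S := by
            rintro y ⟨x, hx, rfl⟩
            exact (hIoo hx).2
          have hb : m '' Icc u v ⊆ S := by
            rw [← closure_Ioo hlt.ne]
            calc m '' closure (Ioo u v) ⊆ closure (m '' Ioo u v) :=
                  image_closure_subset_closure_image hmc
              _ ⊆ closure (interior S) := closure_mono ha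
              _ ⊆ closure S := closure_mono interior_subset
              _ = S := hS.closure_eq
          intro x hx
          exact hb ⟨x, hx, rfl⟩
        have hrmem : ∀ t : unitInterval, u + ↑t * (v - u) ∈ Icc u v := by
          intro t
          have h1' := t.2.1
          have h2' := t.2.2
          constructor
          · nlinarith
          · nlinarith
        have hcontd : Continuous
            (fun t : unitInterval => (⟨m (u + ↑t * (v - u)), hmS _ (hrmem t)⟩ : S)) :=
          Continuous.subtype_mk
            (hmc.comp (continuous_const.add (continuous_subtype_val.mul continuous_const))) _
        calc eVariationOn (fun x : ℝ => g (m x)) (Icc u v)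
            = curveELength (fun t : unitInterval => g (m (u + ↑t * (v - u)))) :=
              (evar_affine (fun x : ℝ => g (m x)) huv).symm
          _ = curveELength
                (fun t : unitInterval => h (⟨m (u + ↑t * (v - u)), hmS _ (hrmem t)⟩ : S)) :=
              congrArg curveELength (funext fun t => hgS _ (hmS _ (hrmem t)))
          _ ≤ curveELength (fun t : unitInterval => f (m (u + ↑t * (v - u)))) := by
              have hkey := hshorter ⟨fun t => ⟨m (u + ↑t * (v - u)), hmS _ (hrmem t)⟩, hcontd⟩
              simp only [ContinuousMap.coe_mk] at hkey
              exact hkey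
          _ = eVariationOn (fun x : ℝ => f (m x)) (Icc u v) :=
              evar_affine (fun x : ℝ => f (m x)) huv
    have hmain := key_evar_le (fun x : ℝ => f (m x)) (fun x : ℝ => g (m x)) V hVc heq' hshortUV
    calc curveELength (fun t => g (c' t))
        = eVariationOn (fun x : ℝ => g (m x)) (Icc 0 1) := by
          simp only [hm]
          exact curveELength_eq_evar g c'
      _ ≤ eVariationOn (fun x : ℝ => f (m x)) (Icc 0 1) := hmain
      _ = curveELength (fun t => f (c' t)) := by
          simp only [hm]
          exact (curveELength_eq_evar f c').symm
  have hpres := hfmin g hgcont heqZ hshort'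
  have hcc := hpres ⟨fun t => ((c t : S) : X), continuous_subtype_val.comp c.continuous⟩
  simp only [ContinuousMap.coe_mk] at hcc
  have e1 : (fun t : unitInterval => g ((c t : S) : X)) = fun t => h (c t) :=
    funext fun t => hgS _ (c t).2
  rw [e1] at hcc
  exact hcc
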